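/- Let U be a unitary operator on a Hilbert space H and let Q be the orthogonal projection onto the fixed-point subspace {x ∈ H : Ux = x}. Then for all x, y ∈ H, lim_{N→∞} (1/N) ∑_{n=1}^N ⟨y, Uⁿx⟩ = ⟨y, Qx⟩. -/

import Mathlib

open Filter

set_option synthInstance.maxHeartbeats 1000000 in
/-- Weak form of the von Neumann mean ergodic theorem. -/
theorem mean_ergodic_inner
    {H : Type*} [NormedAddCommGroup H] [InnerProductSpace ℂ H] [CompleteSpace H]
    (U : H ≃ₗᵢ[ℂ] H) (Q : H →L[ℂ] H)
    (hQfix : ∀ x : H, U (Q x) = Q x)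
    (hQid : ∀ x : H, U x = x → Q x = x)
    (hQorth : ∀ x y : H, U y = y → (inner ℂ (x - Q x) y : ℂ) = 0)
    (x y : H) :
    Tendsto (fun N : ℕ => (1 / (N : ℂ)) * ∑ n ∈ Finset.Icc 1 N, (inner ℂ y ((U ^ n) x) : ℂ))
      atTop (nhds (inner ℂ y (Q x))) := by
  set f : H →L[ℂ] H := U.toLinearIsometry.toContinuousLinearMap with hf
  have hf1 : ‖f‖ ≤ 1 := U.toLinearIsometry.norm_toContinuousLinearMap_le
  set K := LinearMap.eqLocus (f : H →ₗ[ℂ] H) ((1 : H →L[ℂ] H) : H →ₗ[ℂ] H) with hK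
  have hmemK : ∀ z : H, z ∈ K ↔ U z = z := fun z => Iff.rfl
  -- iterates of f are powers of U
  have hiter : ∀ (k : ℕ) (z : H), f^[k] z = (U ^ k) z := by
    intro k
    induction k with
    | zero => intro z; simp
    | succ k ih =>
      intro z
      rw [Function.iterate_succ_apply, pow_succ, LinearIsometryEquiv.coe_mul]
      exact ih (U z)
  -- Q equals the orthogonal projection onto K
  have hQP : ∀ z : H, (K.orthogonalProjectionOnto z : H) = Q z := by
    intro z
    refine Submodule.eq_starProjection_of_mem_of_inner_eq_zero ?_ ?_
    · exact hQfix z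
    · intro w hw
      exact hQorth z w hw
  -- projection of U x equals projection of x
  have hUx : (K.orthogonalProjectionOnto ((U : H → H) x) : H) = Q x := by
    have hsub : (U : H → H) x - x ∈ Kᗮ := by
      intro w hw
      have hw' : U w = w := hw
      calc (inner ℂ w ((U : H → H) x - x) : ℂ)
          = inner ℂ w ((U : H → H) x) - inner ℂ w x := by rw [inner_sub_right]
        _ = inner ℂ (U w) ((U : H → H) x) - inner ℂ w x := by rw [hw']
        _ = 0 := by rw [LinearIsometryEquiv.inner_map_map]; ring
    have : (U : H → H) x = x + ((U : H → H) x - x) := by abel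
    rw [this, map_add, Submodule.orthogonalProjectionOnto_apply_of_mem_orthogonal hsub]
    simpa using hQP x
  have h := (f.tendsto_birkhoffAverage_orthogonalProjection hf1 ((U : H → H) x))
  rw [hUx] at h
  have h2 := Filter.Tendsto.inner (𝕜 := ℂ) (tendsto_const_nhds (x := y)) h
  refine h2.congr fun N => ?_
  simp only [birkhoffAverage, birkhoffSum, id]
  rw [inner_smul_right, inner_sum]
  congr 1
  · simp
  · rw [show Finset.Icc 1 N = Finset.Ico 1 (N + 1) from (Finset.Ico_add_one_right_eq_Icc 1 N),
      Finset.sum_Ico_eq_sum_range]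
    simp only [Nat.add_sub_cancel]
    refine Finset.sum_congr rfl fun k _ => ?_
    rw [hiter k]
    congr 1
    rw [add_comm, pow_succ, LinearIsometryEquiv.coe_mul]
    rfl
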